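/- arXiv:1909.01928 — 2 statements merged into one kernel-verified Lean document; each statement's English description precedes it below -/
import Mathlib

section
/- Let ξ = [A₁, A₂, ...] ∈ T^{-1}𝔽_q[[T^{-1}]] be irrational with continued fraction partial quotients A_i ∈ 𝔽_q[T] (deg A_i > 0), and suppose there is a non-constant irreducible polynomial R ∈ 𝔽_q[T] dividing A_i for all i ≥ 1. Then there exists α ∈ 𝔽_q((T^{-1})) such that ‖Qξ − α‖ ≥ |R|^{-2}·|Q|^{-1} for every nonzero Q ∈ 𝔽_q[T]. -/
open Polynomial Filter
open scoped Classical ENNReal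

noncomputable section

variable (Fq : Type) [Field Fq] [Fintype Fq]

/-- The element `T` inside the Laurent-series field `𝔽_q((T⁻¹))`, which we realize
as the field of Hahn/Laurent series in the variable `T⁻¹`. -/
def Tel : LaurentSeries Fq := HahnSeries.single (-1 : ℤ) 1

/-- The inverse variable `T⁻¹` itself. -/
def TinvEl : LaurentSeries Fq := HahnSeries.single (1 : ℤ) 1

/-- The embedding of the polynomial ring `𝔽_q[T]` into `𝔽_q((T⁻¹))`,
sending `T` to `Tel`. -/
def polyToL (P : Polynomial Fq) : LaurentSeries Fq :=
  Polynomial.eval₂ HahnSeries.C (Tel Fq) P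

/-- The absolute value `|x| = q ^ (deg x)` on `𝔽_q((T⁻¹))`, with `|0| = 0`.
Here the degree of `x ≠ 0` is minus the order of `x` as a series in `T⁻¹`. -/
def labs (x : LaurentSeries Fq) : ℝ :=
  if x = 0 then 0 else (Fintype.card Fq : ℝ) ^ (-x.order)

/-- `‖x‖`: the distance from `x` to the nearest polynomial. -/
def lnorm (x : LaurentSeries Fq) : ℝ :=
  ⨅ P : Polynomial Fq, labs Fq (x - polyToL Fq P)

/-- `x ∈ 𝔽_q(T)`, i.e. `x` is rational. -/
def IsRat (x : LaurentSeries Fq) : Prop :=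
  ∃ P Q : Polynomial Fq, Q ≠ 0 ∧ polyToL Fq Q * x = polyToL Fq P


/-- Numerators `P_n` of the continued-fraction convergents associated with
partial quotients `C 0 = A₀, C 1 = A₁, …`; indices are shifted by `2`, so that
`cfNum C 0 = P₋₂ = 0`, `cfNum C 1 = P₋₁ = 1`, and `cfNum C (n + 2) = Pₙ`. -/
def cfNum (C : ℕ → Polynomial Fq) : ℕ → Polynomial Fq
  | 0 => 0
  | 1 => 1
  | n + 2 => C n * cfNum C (n + 1) + cfNum C n

/-- Denominators `Q_n` of the continued-fraction convergents, with
`cfDen C 0 = Q₋₂ = 1`, `cfDen C 1 = Q₋₁ = 0`, and `cfDen C (n + 2) = Qₙ`. -/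
def cfDen (C : ℕ → Polynomial Fq) : ℕ → Polynomial Fq
  | 0 => 1
  | 1 => 0
  | n + 2 => C n * cfDen C (n + 1) + cfDen C n

/-- `ξ` has continued-fraction expansion `[C 0; C 1, C 2, …]`, expressed by the
characteristic property `|Qₙ ξ − Pₙ| = |Q_{n+1}|⁻¹` of the convergents. -/
def HasCF (ξ : LaurentSeries Fq) (C : ℕ → Polynomial Fq) : Prop :=
  ∀ n : ℕ, labs Fq (polyToL Fq (cfDen Fq C (n + 2)) * ξ - polyToL Fq (cfNum Fq C (n + 2)))
    = (labs Fq (polyToL Fq (cfDen Fq C (n + 3))))⁻¹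

/-- The convergent matrix `M_k` with rows `(Q_k, −P_k)` and
`((−1)^(k−1) Q_{k−1}, (−1)^k P_{k−1})`. -/
def cfM (C : ℕ → Polynomial Fq) (k : ℕ) : Matrix (Fin 2) (Fin 2) (Polynomial Fq) :=
  !![cfDen Fq C (k + 2), -cfNum Fq C (k + 2);
     (-1 : Polynomial Fq) ^ (k + 1) * cfDen Fq C (k + 1), (-1 : Polynomial Fq) ^ k * cfNum Fq C (k + 1)]

/-- The unipotent matrix `U(a)`. -/
def Umat (a : Polynomial Fq) : Matrix (Fin 2) (Fin 2) (Polynomial Fq) :=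
  !![1, a; 0, 1]


-- basic lemmas
lemma one_lt_qR : (1:ℝ) < (Fintype.card Fq : ℝ) := by
  exact_mod_cast Fintype.one_lt_card

def polyToLHom : Polynomial Fq →+* LaurentSeries Fq :=
  Polynomial.eval₂RingHom (HahnSeries.C) (Tel Fq)

lemma polyToL_eq (P : Polynomial Fq) : polyToL Fq P = polyToLHom Fq P := rfl

lemma polyToL_monomial (n : ℕ) (a : Fq) :
    polyToL Fq (Polynomial.monomial n a) = HahnSeries.single (-(n:ℤ)) a := by
  rw [polyToL, eval₂_monomial, Tel]
  rw [HahnSeries.single_pow]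
  have : HahnSeries.C a = HahnSeries.single (0:ℤ) a := rfl
  rw [this, HahnSeries.single_mul_single]
  simp

lemma coeff_polyToL_pos (B : Polynomial Fq) {i : ℤ} (hi : 0 < i) :
    (polyToL Fq B).coeff i = 0 := by
  induction B using Polynomial.induction_on' with
  | add p q hp hq =>
      rw [polyToL_eq, map_add, HahnSeries.coeff_add, ← polyToL_eq, ← polyToL_eq, hp, hq, add_zero]
  | monomial n a =>
      rw [polyToL_monomial, HahnSeries.coeff_single]
      have : i ≠ -(n:ℤ) := by omega
      simp [this]

lemma coeff_polyToL_neg (B : Polynomial Fq) (j : ℕ) :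
    (polyToL Fq B).coeff (-(j:ℤ)) = B.coeff j := by
  induction B using Polynomial.induction_on' with
  | add p q hp hq =>
      rw [polyToL_eq, map_add, HahnSeries.coeff_add, ← polyToL_eq, ← polyToL_eq, hp, hq,
        Polynomial.coeff_add]
  | monomial n a =>
      rw [polyToL_monomial, HahnSeries.coeff_single, Polynomial.coeff_monomial]
      by_cases h : j = n
      · simp [h]
      · have : -(j:ℤ) ≠ -(n:ℤ) := by omega
        simp [this, (show n ≠ j by omega)]

lemma polyToL_ne_zero {B : Polynomial Fq} (hB : B ≠ 0) : polyToL Fq B ≠ 0 := by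
  intro h
  have := coeff_polyToL_neg Fq B B.natDegree
  rw [h] at this
  simp only [HahnSeries.coeff_zero] at this
  exact hB (Polynomial.leadingCoeff_eq_zero.mp this.symm)

lemma order_polyToL {B : Polynomial Fq} (hB : B ≠ 0) :
    (polyToL Fq B).order = -(B.natDegree : ℤ) := by
  have h1 : (polyToL Fq B).order ≤ -(B.natDegree : ℤ) := by
    apply HahnSeries.order_le_of_coeff_ne_zero
    rw [coeff_polyToL_neg]
    exact fun h => hB (Polynomial.leadingCoeff_eq_zero.mp h)
  rcases lt_or_eq_of_le h1 with h | h
  · exfalso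
    have hne := mt HahnSeries.coeff_order_eq_zero.mp (polyToL_ne_zero Fq hB)
    set o := (polyToL Fq B).order with ho
    rcases le_or_gt o 0 with h0 | h0
    · have : o = -(((-o).toNat : ℕ) : ℤ) := by omega
      rw [this, coeff_polyToL_neg] at hne
      apply hne
      apply Polynomial.coeff_eq_zero_of_natDegree_lt
      omega
    · exact hne (coeff_polyToL_pos Fq B h0)
  · exact h

lemma labs_of_ne {x : LaurentSeries Fq} (hx : x ≠ 0) :
    labs Fq x = (Fintype.card Fq : ℝ) ^ (-x.order) := if_neg hx

lemma labs_polyToL {B : Polynomial Fq} (hB : B ≠ 0) :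
    labs Fq (polyToL Fq B) = (Fintype.card Fq : ℝ) ^ (B.natDegree : ℤ) := by
  rw [labs_of_ne Fq (polyToL_ne_zero Fq hB), order_polyToL Fq hB, neg_neg]




variable (C : ℕ → Polynomial Fq)

lemma cfDen_aux (hdeg : ∀ i, 1 ≤ i → 0 < (C i).natDegree) :
    ∀ m : ℕ, cfDen Fq C (m+2) ≠ 0 ∧ (cfDen Fq C (m+1)).degree < (cfDen Fq C (m+2)).degree ∧
      (cfDen Fq C (m+3)).natDegree = (C (m+1)).natDegree + (cfDen Fq C (m+2)).natDegree := by
  have key : ∀ m : ℕ, cfDen Fq C (m+2) ≠ 0 ∧ (cfDen Fq C (m+1)).degree < (cfDen Fq C (m+2)).degree := by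
    intro m
    induction m with
    | zero =>
        constructor
        · show C 0 * cfDen Fq C 1 + cfDen Fq C 0 ≠ 0
          show C 0 * 0 + 1 ≠ 0
          simp
        · show (cfDen Fq C 1).degree < (C 0 * cfDen Fq C 1 + cfDen Fq C 0).degree
          show (0 : Polynomial Fq).degree < (C 0 * 0 + 1 : Polynomial Fq).degree
          simp
    | succ m ih =>
        obtain ⟨hne, hlt⟩ := ih
        have hC : 0 < (C (m+1)).natDegree := hdeg (m+1) (by omega)
        have hCne : C (m+1) ≠ 0 := fun h => by simp [h] at hC
        have hmul : (C (m+1) * cfDen Fq C (m+2)).degree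
            = (C (m+1)).degree + (cfDen Fq C (m+2)).degree := degree_mul
        have hlt2 : (cfDen Fq C (m+2)).degree < (C (m+1) * cfDen Fq C (m+2)).degree := by
          rw [hmul]
          rw [degree_eq_natDegree hCne, degree_eq_natDegree hne]
          rw [← Nat.cast_add, Nat.cast_lt]
          omega
        have heq : (cfDen Fq C (m+3)).degree = (C (m+1) * cfDen Fq C (m+2)).degree := by
          show (C (m+1) * cfDen Fq C (m+2) + cfDen Fq C (m+1)).degree = _
          exact degree_add_eq_left_of_degree_lt (lt_trans hlt hlt2)
        constructor
        · intro h
          rw [h, degree_zero] at heq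
          rw [degree_mul, degree_eq_natDegree hCne, degree_eq_natDegree hne] at heq
          simp [← Nat.cast_add] at heq
        · rw [heq]; exact hlt2
  intro m
  refine ⟨(key m).1, (key m).2, ?_⟩
  obtain ⟨hne, hlt⟩ := key m
  have hC : 0 < (C (m+1)).natDegree := hdeg (m+1) (by omega)
  have hCne : C (m+1) ≠ 0 := fun h => by simp [h] at hC
  have hlt2 : (cfDen Fq C (m+2)).degree < (C (m+1) * cfDen Fq C (m+2)).degree := by
    rw [degree_mul, degree_eq_natDegree hCne, degree_eq_natDegree hne, ← Nat.cast_add, Nat.cast_lt]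
    omega
  have heq : (cfDen Fq C (m+3)).degree = (C (m+1) * cfDen Fq C (m+2)).degree := by
    show (C (m+1) * cfDen Fq C (m+2) + cfDen Fq C (m+1)).degree = _
    exact degree_add_eq_left_of_degree_lt (lt_trans hlt hlt2)
  have := natDegree_eq_of_degree_eq heq
  rw [this, natDegree_mul hCne hne]

lemma cfDen_ne (hdeg : ∀ i, 1 ≤ i → 0 < (C i).natDegree) (m : ℕ) : cfDen Fq C (m+2) ≠ 0 :=
  (cfDen_aux Fq C hdeg m).1

lemma D_succ (hdeg : ∀ i, 1 ≤ i → 0 < (C i).natDegree) (m : ℕ) :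
    (cfDen Fq C (m+3)).natDegree = (C (m+1)).natDegree + (cfDen Fq C (m+2)).natDegree :=
  (cfDen_aux Fq C hdeg m).2.2

lemma D_zero : (cfDen Fq C 2).natDegree = 0 := by
  show (C 0 * cfDen Fq C 1 + cfDen Fq C 0).natDegree = 0
  show (C 0 * 0 + 1 : Polynomial Fq).natDegree = 0
  simp

lemma D_ge (hdeg : ∀ i, 1 ≤ i → 0 < (C i).natDegree) (m : ℕ) :
    m ≤ (cfDen Fq C (m+2)).natDegree := by
  induction m with
  | zero => omega
  | succ m ih =>
      have e : m+1+2 = m+3 := by omega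
      rw [e]
      have := D_succ Fq C hdeg m
      have := hdeg (m+1) (by omega)
      omega

lemma D_mono (hdeg : ∀ i, 1 ≤ i → 0 < (C i).natDegree) :
    Monotone (fun m => (cfDen Fq C (m+2)).natDegree) := by
  apply monotone_nat_of_le_succ
  intro m
  simp only [show ∀ k:ℕ, k+1+2 = k+3 from fun k => by omega]
  have := D_succ Fq C hdeg m
  omega
set_option linter.unusedSectionVars false


variable (ξ : LaurentSeries Fq) (C : ℕ → Polynomial Fq)

/-- θ_m = Q_m ξ - P_m -/
def theta (m : ℕ) : LaurentSeries Fq :=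
  polyToL Fq (cfDen Fq C (m+2)) * ξ - polyToL Fq (cfNum Fq C (m+2))

lemma theta_facts (hdeg : ∀ i, 1 ≤ i → 0 < (C i).natDegree) (hcf : HasCF Fq ξ C) (m : ℕ) :
    theta Fq ξ C m ≠ 0 ∧ (theta Fq ξ C m).order = ((cfDen Fq C (m+3)).natDegree : ℤ) := by
  have hden : cfDen Fq C (m+3) ≠ 0 := by
    have := cfDen_ne Fq C hdeg (m+1); rwa [show m+1+2 = m+3 by omega] at this
  have h := hcf m
  rw [labs_polyToL Fq hden] at h
  have hq1 : (1:ℝ) < (Fintype.card Fq : ℝ) := one_lt_qR Fq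
  have hqpos : (0:ℝ) < (Fintype.card Fq : ℝ) := by linarith
  have hrhs : ((Fintype.card Fq : ℝ) ^ ((cfDen Fq C (m+3)).natDegree : ℤ))⁻¹
      = (Fintype.card Fq : ℝ) ^ (-((cfDen Fq C (m+3)).natDegree : ℤ)) := by
    rw [zpow_neg]
  rw [hrhs] at h
  have hne : theta Fq ξ C m ≠ 0 := by
    intro h0
    have hz : labs Fq (0 : LaurentSeries Fq) = 0 := if_pos rfl
    rw [show labs Fq (polyToL Fq (cfDen Fq C (m + 2)) * ξ - polyToL Fq (cfNum Fq C (m + 2)))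
        = labs Fq (theta Fq ξ C m) from rfl, h0, hz] at h
    exact absurd h.symm (ne_of_gt (zpow_pos hqpos _))
  refine ⟨hne, ?_⟩
  rw [show labs Fq (polyToL Fq (cfDen Fq C (m + 2)) * ξ - polyToL Fq (cfNum Fq C (m + 2)))
      = labs Fq (theta Fq ξ C m) from rfl, labs_of_ne Fq hne] at h
  have := zpow_right_injective₀ hqpos (ne_of_gt hq1) h
  omega

variable (R : Polynomial Fq)

/-- digit c_m = A_{m+1}/R -/
def digitc (m : ℕ) : Polynomial Fq := C (m+1) / R

lemma digitc_spec (hRdeg : 0 < R.natDegree) (hdeg : ∀ i, 1 ≤ i → 0 < (C i).natDegree)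
    (hdvd : ∀ i, 1 ≤ i → R ∣ C i) (m : ℕ) :
    digitc Fq C R m ≠ 0 ∧ (C (m+1)).natDegree = R.natDegree + (digitc Fq C R m).natDegree := by
  have hR0 : R ≠ 0 := fun h => by simp [h] at hRdeg
  have hmul : R * digitc Fq C R m = C (m+1) :=
    EuclideanDomain.mul_div_cancel' hR0 (hdvd (m+1) (by omega))
  have hCne : C (m+1) ≠ 0 := fun h => by have := hdeg (m+1) (by omega); simp [h] at this
  have hcne : digitc Fq C R m ≠ 0 := by
    intro h; rw [h, mul_zero] at hmul; exact hCne hmul.symm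
  refine ⟨hcne, ?_⟩
  rw [← hmul, natDegree_mul hR0 hcne]

/-- coefficient of a finite sum -/
lemma coeff_sum {β : Type*} (s : Finset β) (f : β → LaurentSeries Fq) (i : ℤ) :
    (∑ m ∈ s, f m).coeff i = ∑ m ∈ s, (f m).coeff i := by
  classical
  induction s using Finset.induction_on with
  | empty => simp
  | insert _ _ h ih => rw [Finset.sum_insert h, Finset.sum_insert h, HahnSeries.coeff_add, ih]

/-- partial sums of α -/
def Ssum (N : ℕ) : LaurentSeries Fq :=
  ∑ m ∈ Finset.range N, polyToL Fq (digitc Fq C R m) * theta Fq ξ C m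

lemma order_term (hdeg : ∀ i, 1 ≤ i → 0 < (C i).natDegree) (hcf : HasCF Fq ξ C)
    {d : Polynomial Fq} (hd : d ≠ 0) (m : ℕ) :
    (polyToL Fq d * theta Fq ξ C m).order
      = ((cfDen Fq C (m+3)).natDegree : ℤ) - d.natDegree ∧ polyToL Fq d * theta Fq ξ C m ≠ 0 := by
  obtain ⟨hθ, hord⟩ := theta_facts Fq ξ C hdeg hcf m
  have hne := mul_ne_zero (polyToL_ne_zero Fq hd) hθ
  refine ⟨?_, hne⟩
  rw [HahnSeries.order_mul (polyToL_ne_zero Fq hd) hθ, order_polyToL Fq hd, hord]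
  ring

lemma order_Sterm (hRdeg : 0 < R.natDegree) (hdeg : ∀ i, 1 ≤ i → 0 < (C i).natDegree)
    (hcf : HasCF Fq ξ C) (hdvd : ∀ i, 1 ≤ i → R ∣ C i) (m : ℕ) :
    (polyToL Fq (digitc Fq C R m) * theta Fq ξ C m).order
      = ((cfDen Fq C (m+2)).natDegree : ℤ) + R.natDegree := by
  obtain ⟨hcne, hcdeg⟩ := digitc_spec Fq C R hRdeg hdeg hdvd m
  have := (order_term Fq ξ C hdeg hcf hcne m).1
  rw [this]
  have hD := D_succ Fq C hdeg m
  omega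

lemma Sterm_coeff_zero (hRdeg : 0 < R.natDegree) (hdeg : ∀ i, 1 ≤ i → 0 < (C i).natDegree)
    (hcf : HasCF Fq ξ C) (hdvd : ∀ i, 1 ≤ i → R ∣ C i) (m : ℕ) {i : ℤ} (hi : i ≤ m) :
    (polyToL Fq (digitc Fq C R m) * theta Fq ξ C m).coeff i = 0 := by
  apply HahnSeries.coeff_eq_zero_of_lt_order
  rw [order_Sterm Fq ξ C R hRdeg hdeg hcf hdvd m]
  have h1 : m ≤ (cfDen Fq C (m+2)).natDegree := D_ge Fq C hdeg m
  omega

lemma Ssum_stable (hRdeg : 0 < R.natDegree) (hdeg : ∀ i, 1 ≤ i → 0 < (C i).natDegree)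
    (hcf : HasCF Fq ξ C) (hdvd : ∀ i, 1 ≤ i → R ∣ C i) {i : ℤ} {N N' : ℕ}
    (hN : i ≤ N) (hNN : N ≤ N') :
    (Ssum Fq ξ C R N').coeff i = (Ssum Fq ξ C R N).coeff i := by
  rw [Ssum, Ssum, coeff_sum, coeff_sum]
  symm
  apply Finset.sum_subset (Finset.range_subset_range.mpr hNN)
  intro m _ hm
  rw [Finset.mem_range, not_lt] at hm
  exact Sterm_coeff_zero Fq ξ C R hRdeg hdeg hcf hdvd m (by omega)

/-- the inhomogeneous shift α -/
def alphaCF : LaurentSeries Fq :=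
  HahnSeries.single (1 : ℤ) 1 * HahnSeries.ofPowerSeries ℤ Fq
    (PowerSeries.mk fun j => (Ssum Fq ξ C R (j+2)).coeff ((j:ℤ)+1))

lemma alpha_coeff_eq (hRdeg : 0 < R.natDegree) (hdeg : ∀ i, 1 ≤ i → 0 < (C i).natDegree)
    (hcf : HasCF Fq ξ C) (hdvd : ∀ i, 1 ≤ i → R ∣ C i) {N : ℕ} {i : ℤ}
    (h1 : 1 ≤ i) (h2 : i ≤ N) :
    (alphaCF Fq ξ C R).coeff i = (Ssum Fq ξ C R N).coeff i := by
  obtain ⟨j, rfl⟩ : ∃ j : ℕ, i = (j:ℤ) + 1 := ⟨(i-1).toNat, by omega⟩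
  have h3 : (alphaCF Fq ξ C R).coeff ((j:ℤ)+1) = (Ssum Fq ξ C R (j+2)).coeff ((j:ℤ)+1) := by
    rw [alphaCF, show ((j:ℤ)+1) = (j:ℤ)+(1:ℤ) from rfl, HahnSeries.coeff_single_mul_add, one_mul]
    rw [show ((j:ℤ)) = ((j:ℕ) : ℤ) from rfl, HahnSeries.ofPowerSeries_apply_coeff,
      PowerSeries.coeff_mk]
  rw [h3]
  rcases le_total (j+2) N with h | h
  · exact (Ssum_stable Fq ξ C R hRdeg hdeg hcf hdvd (by omega : (j:ℤ)+1 ≤ ((j+2:ℕ):ℤ)) h).symm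
  · exact Ssum_stable Fq ξ C R hRdeg hdeg hcf hdvd h2 h

lemma ostrowski (hdeg : ∀ i, 1 ≤ i → 0 < (C i).natDegree) :
    ∀ d : ℕ, ∀ Q : Polynomial Fq, Q ≠ 0 → Q.natDegree ≤ d →
    ∃ n : ℕ, ∃ b : ℕ → Polynomial Fq, b n ≠ 0 ∧
      (∀ k, b k = 0 ∨ (b k).natDegree < (C (k+1)).natDegree) ∧
      (∀ k, n < k → b k = 0) ∧
      Q = ∑ k ∈ Finset.range (n+1), b k * cfDen Fq C (k+2) ∧
      Q.natDegree = (b n).natDegree + (cfDen Fq C (n+2)).natDegree := by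
  intro d
  induction d using Nat.strong_induction_on with
  | _ d IH =>
  intro Q hQne hQd
  set dQ := Q.natDegree with hdQ
  set n := Nat.findGreatest (fun k => (cfDen Fq C (k+2)).natDegree ≤ dQ) dQ with hn_def
  have hP0 : (cfDen Fq C (0+2)).natDegree ≤ dQ := by rw [D_zero Fq C]; omega
  have hn : (cfDen Fq C (n+2)).natDegree ≤ dQ :=
    Nat.findGreatest_spec (P := fun k => (cfDen Fq C (k+2)).natDegree ≤ dQ) (Nat.zero_le dQ) hP0
  have hmax : dQ < (cfDen Fq C (n+3)).natDegree := by
    by_cases hcase : n + 1 ≤ dQ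
    · have := Nat.findGreatest_is_greatest
        (P := fun k => (cfDen Fq C (k+2)).natDegree ≤ dQ) (lt_add_one n) hcase
      simp only [not_le] at this
      rwa [show n+1+2 = n+3 by omega] at this
    · have h1 : n + 1 ≤ (cfDen Fq C (n+1+2)).natDegree := D_ge Fq C hdeg (n+1)
      rw [show n+1+2 = n+3 by omega] at h1
      omega
  set den := cfDen Fq C (n+2) with hden_def
  have hden : den ≠ 0 := cfDen_ne Fq C hdeg n
  set q' := Q / den with hq'_def
  set r := Q % den with hr_def
  have heq : den * q' + r = Q := EuclideanDomain.div_add_mod Q den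
  have hrlt : r.degree < den.degree := EuclideanDomain.mod_lt Q hden
  have hdle : den.degree ≤ Q.degree := by
    rw [degree_eq_natDegree hden, degree_eq_natDegree hQne]
    exact_mod_cast hn
  have hq'ne : q' ≠ 0 := by
    intro h0
    have := (Polynomial.div_eq_zero_iff hden).mp h0
    exact absurd hdle (not_le.mpr this)
  have hnd : Q.natDegree = q'.natDegree + den.natDegree := by
    have h := degree_add_div hden hdle
    rw [degree_eq_natDegree hden, degree_eq_natDegree hq'ne, degree_eq_natDegree hQne,
      ← Nat.cast_add, Nat.cast_inj] at h
    omega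
  have hq'deg : q'.natDegree < (C (n+1)).natDegree := by
    have hDs := D_succ Fq C hdeg n
    rw [← hden_def] at hDs
    omega
  by_cases hr : r = 0
  · refine ⟨n, fun k => if k = n then q' else 0, by simp [hq'ne], ?_, ?_, ?_, ?_⟩
    · intro k
      by_cases h : k = n
      · subst h; right; simpa using hq'deg
      · left; simp [h]
    · intro k hk; simp [Nat.ne_of_gt hk]
    · rw [Finset.sum_eq_single_of_mem n (Finset.self_mem_range_succ n)
        (fun k _ hk => by simp [hk])]
      rw [← heq, hr, add_zero, mul_comm]
      simp [hden_def]
    · simp only [if_pos rfl]; exact hnd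
  · have hrnat : r.natDegree < den.natDegree := natDegree_lt_natDegree hr hrlt
    obtain ⟨n', b', hb'n, hb'dig, hb'gt, hb'sum, hb'deg⟩ :=
      IH r.natDegree (by omega) r hr le_rfl
    have hn' : n' < n := by
      by_contra hcon
      push_neg at hcon
      have hmono := D_mono Fq C hdeg hcon
      simp only at hmono
      rw [← hden_def] at hmono
      omega
    refine ⟨n, fun k => if k = n then q' else b' k, by simp [hq'ne], ?_, ?_, ?_, ?_⟩
    · intro k
      by_cases h : k = n
      · subst h; right; simpa using hq'deg
      · simp only [if_neg h]; exact hb'dig k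
    · intro k hk
      simp only [if_neg (Nat.ne_of_gt hk)]
      exact hb'gt k (by omega)
    · rw [Finset.sum_range_succ]
      beta_reduce
      rw [if_pos rfl]
      have hsum1 : ∑ k ∈ Finset.range n, (if k = n then q' else b' k) * cfDen Fq C (k+2)
          = ∑ k ∈ Finset.range n, b' k * cfDen Fq C (k+2) := by
        apply Finset.sum_congr rfl
        intro k hk
        rw [Finset.mem_range] at hk
        rw [if_neg (by omega)]
      rw [hsum1]
      have hsum2 : ∑ k ∈ Finset.range (n'+1), b' k * cfDen Fq C (k+2)
          = ∑ k ∈ Finset.range n, b' k * cfDen Fq C (k+2) := by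
        apply Finset.sum_subset (Finset.range_subset_range.mpr (by omega))
        intro k _ hk
        rw [Finset.mem_range, not_lt] at hk
        rw [hb'gt k (by omega), zero_mul]
      rw [← hsum2, ← hb'sum, ← heq, ← hden_def]
      ring
    · simp only [if_pos rfl]; exact hnd

/-- **Badly approximable inhomogeneous pairs.** If the partial quotients of
`ξ = [A₁, A₂, …] ∈ T⁻¹𝔽_q[[T⁻¹]]` are all divisible by a fixed non-constant
irreducible polynomial `R`, then there is `α` with
`‖Qξ − α‖ ≥ |R|⁻² |Q|⁻¹` for every nonzero `Q`. -/
theorem stmt10 (ξ : LaurentSeries Fq) (C : ℕ → Polynomial Fq) (R : Polynomial Fq)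
    (hξirr : ¬ IsRat Fq ξ) (hξ1 : labs Fq ξ < 1)
    (hC0 : C 0 = 0) (hdeg : ∀ i, 1 ≤ i → 0 < (C i).natDegree)
    (hcf : HasCF Fq ξ C)
    (hR : Irreducible R) (hRdeg : 0 < R.natDegree)
    (hdvd : ∀ i, 1 ≤ i → R ∣ C i) :
    ∃ α : LaurentSeries Fq, ∀ Q : Polynomial Fq, Q ≠ 0 →
      1 / (labs Fq (polyToL Fq R) ^ 2 * labs Fq (polyToL Fq Q)) ≤
        lnorm Fq (polyToL Fq Q * ξ - α) := by
  classical
  have hq1 : (1:ℝ) < (Fintype.card Fq : ℝ) := one_lt_qR Fq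
  have hq0 : (0:ℝ) < (Fintype.card Fq : ℝ) := lt_trans one_pos hq1
  have hR0 : R ≠ 0 := fun h => by simp [h] at hRdeg
  refine ⟨alphaCF Fq ξ C R, ?_⟩
  intro Q hQ
  obtain ⟨n, b, hbn, hbdig, hbgt, hbsum, hbdeg⟩ :=
    ostrowski Fq C hdeg Q.natDegree Q hQ le_rfl
  set d : ℕ → Polynomial Fq := fun k => b k - digitc Fq C R k with hd_def
  set B : ℤ := 2 * (R.natDegree : ℤ) + (Q.natDegree : ℤ) with hB_def
  set N : ℕ := Q.natDegree + 2 * R.natDegree + n + 2 with hN_def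
  -- digit facts
  have hcfacts := fun k => digitc_spec Fq C R hRdeg hdeg hdvd k
  -- degree bound on d
  have hddeg : ∀ k, d k ≠ 0 → (d k).natDegree < (C (k+1)).natDegree := by
    intro k _
    have h1 : (b k).natDegree < (C (k+1)).natDegree := by
      rcases hbdig k with h | h
      · rw [h, natDegree_zero]; exact hdeg (k+1) (by omega)
      · exact h
    have h2 : (digitc Fq C R k).natDegree < (C (k+1)).natDegree := by
      have := (hcfacts k).2; omega
    calc (d k).natDegree ≤ max (b k).natDegree (digitc Fq C R k).natDegree :=
          natDegree_sub_le _ _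
      _ < (C (k+1)).natDegree := by omega
  -- order of terms
  have hordt : ∀ k, d k ≠ 0 → (polyToL Fq (d k) * theta Fq ξ C k).order
      = ((cfDen Fq C (k+3)).natDegree : ℤ) - (d k).natDegree :=
    fun k hk => (order_term Fq ξ C hdeg hcf hk k).1
  have htne : ∀ k, d k ≠ 0 → polyToL Fq (d k) * theta Fq ξ C k ≠ 0 :=
    fun k hk => (order_term Fq ξ C hdeg hcf hk k).2
  have hlow : ∀ k, d k ≠ 0 →
      ((cfDen Fq C (k+2)).natDegree : ℤ) + 1 ≤ (polyToL Fq (d k) * theta Fq ξ C k).order := by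
    intro k hk
    rw [hordt k hk]
    have h1 := D_succ Fq C hdeg k
    have h2 := hddeg k hk
    omega
  have hup : ∀ k, d k ≠ 0 →
      (polyToL Fq (d k) * theta Fq ξ C k).order ≤ ((cfDen Fq C (k+3)).natDegree : ℤ) := by
    intro k hk; rw [hordt k hk]; omega
  -- the witness
  obtain ⟨w, hwN, hdw, hwB⟩ : ∃ w, w < N ∧ d w ≠ 0 ∧
      (polyToL Fq (d w) * theta Fq ξ C w).order ≤ B := by
    have hQdeg : Q.natDegree = (b n).natDegree + (cfDen Fq C (n+2)).natDegree := hbdeg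
    by_cases hdn : d n ≠ 0
    · refine ⟨n, by omega, hdn, ?_⟩
      rw [hordt n hdn]
      have hD := D_succ Fq C hdeg n
      have hC := (hcfacts n).2
      rcases le_or_gt (digitc Fq C R n).natDegree (b n).natDegree with h1 | h1
      · omega
      · have hdd : (d n).natDegree = (digitc Fq C R n).natDegree :=
          natDegree_sub_eq_right_of_natDegree_lt h1
        omega
    · push_neg at hdn
      have hbc : b n = digitc Fq C R n := by
        have := sub_eq_zero.mp hdn; exact this
      have hbzero : b (n+1) = 0 := hbgt (n+1) (lt_add_one n)
      have hdw1 : d (n+1) = -(digitc Fq C R (n+1)) := by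
        show b (n+1) - digitc Fq C R (n+1) = _
        rw [hbzero]; ring
      have hdwne : d (n+1) ≠ 0 := by
        rw [hdw1]; exact neg_ne_zero.mpr (hcfacts (n+1)).1
      refine ⟨n+1, by omega, hdwne, ?_⟩
      rw [hordt (n+1) hdwne]
      have hdd : (d (n+1)).natDegree = (digitc Fq C R (n+1)).natDegree := by
        rw [hdw1, natDegree_neg]
      have hD := D_succ Fq C hdeg n
      have hD2 := D_succ Fq C hdeg (n+1)
      rw [show n+1+3 = n+4 from by omega, show n+1+2 = n+3 from by omega] at hD2
      rw [show n+1+3 = n+4 from by omega]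
      have hC := (hcfacts n).2
      have hC2 := (hcfacts (n+1)).2
      have hbcdeg : (b n).natDegree = (digitc Fq C R n).natDegree := by rw [hbc]
      omega
  -- the minimal index
  set M : Finset ℕ := (Finset.range N).filter (fun k => d k ≠ 0) with hM_def
  have hMne : M.Nonempty := ⟨w, by rw [hM_def, Finset.mem_filter, Finset.mem_range]; exact ⟨hwN, hdw⟩⟩
  set ks := M.min' hMne with hks_def
  have hksM : ks ∈ M := M.min'_mem hMne
  have hksN : ks < N := by
    have := hksM; rw [hM_def, Finset.mem_filter, Finset.mem_range] at this; exact this.1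
  have hdks : d ks ≠ 0 := by
    have := hksM; rw [hM_def, Finset.mem_filter] at this; exact this.2
  set i0 : ℤ := (polyToL Fq (d ks) * theta Fq ξ C ks).order with hi0_def
  have hi0_1 : 1 ≤ i0 := by
    have := hlow ks hdks; omega
  have hsep : ∀ k ∈ Finset.range N, k ≠ ks → d k ≠ 0 →
      i0 < (polyToL Fq (d k) * theta Fq ξ C k).order := by
    intro k hkr hkne hdk
    have hkM : k ∈ M := by rw [hM_def, Finset.mem_filter]; exact ⟨hkr, hdk⟩
    have hklt : ks < k := lt_of_le_of_ne (M.min'_le k hkM) (fun h => hkne h.symm)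
    have h1 : i0 ≤ ((cfDen Fq C (ks+3)).natDegree : ℤ) := hup ks hdks
    have h2 : (cfDen Fq C (ks+3)).natDegree ≤ (cfDen Fq C (k+2)).natDegree := by
      have := D_mono Fq C hdeg (show ks + 1 ≤ k by omega)
      simp only at this
      rwa [show ks+1+2 = ks+3 from by omega] at this
    have h3 := hlow k hdk
    omega
  have hi0B : i0 ≤ B := by
    rcases eq_or_ne w ks with h | h
    · rw [hi0_def, ← h]; exact hwB
    · have := hsep w (Finset.mem_range.mpr hwN) (fun hc => h hc) hdw
      omega
  have hi0N : i0 ≤ (N : ℤ) := by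
    have : B ≤ (N : ℤ) := by rw [hB_def, hN_def]; push_cast; omega
    omega
  -- decomposition
  have hQsum : Q = ∑ k ∈ Finset.range N, b k * cfDen Fq C (k+2) := by
    rw [hbsum]
    apply Finset.sum_subset (Finset.range_subset_range.mpr (by omega))
    intro k _ hk
    rw [Finset.mem_range, not_lt] at hk
    rw [hbgt k (by omega), zero_mul]
  have h1 : polyToL Fq Q = ∑ k ∈ Finset.range N,
      polyToL Fq (b k) * polyToL Fq (cfDen Fq C (k+2)) := by
    conv_lhs => rw [hQsum]
    rw [polyToL_eq, map_sum]
    exact Finset.sum_congr rfl (fun k _ => by rw [map_mul]; rfl)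
  have h3 : polyToL Fq (∑ k ∈ Finset.range N, b k * cfNum Fq C (k+2))
      = ∑ k ∈ Finset.range N, polyToL Fq (b k) * polyToL Fq (cfNum Fq C (k+2)) := by
    rw [polyToL_eq, map_sum]
    exact Finset.sum_congr rfl (fun k _ => by rw [map_mul]; rfl)
  have hkey : ∀ k, polyToL Fq (b k) * polyToL Fq (cfDen Fq C (k+2)) * ξ
      = (polyToL Fq (d k) * theta Fq ξ C k)
        + polyToL Fq (b k) * polyToL Fq (cfNum Fq C (k+2))
        + polyToL Fq (digitc Fq C R k) * theta Fq ξ C k := by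
    intro k
    have h4 : polyToL Fq (d k) = polyToL Fq (b k) - polyToL Fq (digitc Fq C R k) := by
      rw [hd_def]; simp only []
      rw [polyToL_eq, polyToL_eq, polyToL_eq, map_sub]
    rw [h4, theta]
    ring
  have hdecomp : polyToL Fq Q * ξ - alphaCF Fq ξ C R
      = (∑ k ∈ Finset.range N, polyToL Fq (d k) * theta Fq ξ C k)
        + polyToL Fq (∑ k ∈ Finset.range N, b k * cfNum Fq C (k+2))
        + (Ssum Fq ξ C R N - alphaCF Fq ξ C R) := by
    rw [h1, Finset.sum_mul, h3, Ssum]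
    rw [Finset.sum_congr rfl (fun k _ => hkey k)]
    rw [Finset.sum_add_distrib, Finset.sum_add_distrib]
    ring
  -- the coefficient at i0
  have hcoeff : (polyToL Fq Q * ξ - alphaCF Fq ξ C R).coeff i0
      = (polyToL Fq (d ks) * theta Fq ξ C ks).coeff i0 := by
    rw [hdecomp, HahnSeries.coeff_add, HahnSeries.coeff_add, HahnSeries.coeff_sub]
    rw [alpha_coeff_eq Fq ξ C R hRdeg hdeg hcf hdvd hi0_1 hi0N]
    rw [coeff_polyToL_pos Fq _ (by omega : (0:ℤ) < i0)]
    rw [coeff_sum]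
    rw [Finset.sum_eq_single_of_mem ks (Finset.mem_range.mpr hksN) ?_]
    · ring
    · intro k hkr hkne
      by_cases hdk : d k = 0
      · rw [hdk]
        rw [show polyToL Fq 0 = 0 from by rw [polyToL_eq, map_zero]]
        rw [zero_mul, HahnSeries.coeff_zero]
      · exact HahnSeries.coeff_eq_zero_of_lt_order (hsep k hkr hkne hdk)
  have hcne0 : (polyToL Fq Q * ξ - alphaCF Fq ξ C R).coeff i0 ≠ 0 := by
    rw [hcoeff]
    exact mt HahnSeries.coeff_order_eq_zero.mp (htne ks hdks)
  -- final bound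
  have hLHS : 1 / (labs Fq (polyToL Fq R) ^ 2 * labs Fq (polyToL Fq Q))
      = (Fintype.card Fq : ℝ) ^ (-B) := by
    rw [labs_polyToL Fq hR0, labs_polyToL Fq hQ, sq, ← zpow_add₀ (ne_of_gt hq0),
      ← zpow_add₀ (ne_of_gt hq0), one_div, ← zpow_neg]
    congr 1
    rw [hB_def]; ring
  rw [hLHS, lnorm]
  apply le_ciInf
  intro P
  have hyc : ((polyToL Fq Q * ξ - alphaCF Fq ξ C R) - polyToL Fq P).coeff i0
      = (polyToL Fq Q * ξ - alphaCF Fq ξ C R).coeff i0 := by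
    rw [HahnSeries.coeff_sub, coeff_polyToL_pos Fq _ (by omega : (0:ℤ) < i0), sub_zero]
  have hyne : (polyToL Fq Q * ξ - alphaCF Fq ξ C R) - polyToL Fq P ≠ 0 := by
    intro h
    rw [h, HahnSeries.coeff_zero] at hyc
    exact hcne0 hyc.symm
  have hord : ((polyToL Fq Q * ξ - alphaCF Fq ξ C R) - polyToL Fq P).order ≤ i0 :=
    HahnSeries.order_le_of_coeff_ne_zero (by rw [hyc]; exact hcne0)
  rw [labs_of_ne Fq hyne]
  apply zpow_le_zpow_right₀ (le_of_lt hq1)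
  omega

end
end

section
/- Let ξ ∈ 𝔽_q((T^{-1})) be irrational with |ξ| ≤ 1 and convergents P_n/Q_n and convergent matrices M_k. Let N ∈ SL₂(𝔽_q[T]) have rows (t, t') and (s, s'), let a ∈ 𝔽_q[T], and write γ = N·U(a)·M_k with entries V₁, U₁ (top row) and V₂, U₂ (bottom row). For y ∈ 𝔽_q((T^{-1})), setting δ = s·y − t and δ' = s'·y − t', one has |V₁ξ + U₁ − y(V₂ξ + U₂)| ≤ max{ |δ|/|Q_{k+1}|, |δa + δ'|/|Q_k| }. -/
open Polynomial Filter
open scoped Classical ENNReal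

noncomputable section

variable (Fq : Type) [Field Fq] [Fintype Fq]

/-- `SL₂(𝔽_q[T])`. -/
abbrev SL2 := Matrix.SpecialLinearGroup (Fin 2) (Polynomial Fq)

/-- Maximum of the absolute values of the entries of a `2 × 2` matrix. -/
def matAbs (M : Matrix (Fin 2) (Fin 2) (LaurentSeries Fq)) : ℝ :=
  max (max (labs Fq (M 0 0)) (labs Fq (M 0 1))) (max (labs Fq (M 1 0)) (labs Fq (M 1 1)))

/-- The size `|γ|` of a matrix `γ ∈ SL₂(𝔽_q[T])`. -/
def gabs (γ : SL2 Fq) : ℝ :=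
  matAbs Fq (((γ : Matrix (Fin 2) (Fin 2) (Polynomial Fq))).map (polyToL Fq))

/-- Maximum of the absolute values of the coordinates of a vector. -/
def vabs (v : Fin 2 → LaurentSeries Fq) : ℝ :=
  max (labs Fq (v 0)) (labs Fq (v 1))

/-- The standard linear action of `SL₂(𝔽_q[T])` on `𝔽_q((T⁻¹))²`. -/
def act (γ : SL2 Fq) (v : Fin 2 → LaurentSeries Fq) : Fin 2 → LaurentSeries Fq :=
  (((γ : Matrix (Fin 2) (Fin 2) (Polynomial Fq))).map (polyToL Fq)).mulVec v

/-- The asymptotic Diophantine exponent `μ(x, y)` (as an element of `ℝ≥0∞`). -/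
def muExp (x y : Fin 2 → LaurentSeries Fq) : ℝ≥0∞ :=
  ⨆ m ∈ {m : ℝ |
      {γ : SL2 Fq | vabs Fq (act Fq γ x - y) ≤ gabs Fq γ ^ (-m)}.Infinite},
    ENNReal.ofReal m

/-- The uniform Diophantine exponent `μ̂(x, y)` (as an element of `ℝ≥0∞`). -/
def muHatExp (x y : Fin 2 → LaurentSeries Fq) : ℝ≥0∞ :=
  ⨆ m ∈ {m : ℝ | ∀ᶠ H : ℝ in atTop, ∃ γ : SL2 Fq,
      gabs Fq γ ≤ H ∧ vabs Fq (act Fq γ x - y) ≤ H ^ (-m)},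
    ENNReal.ofReal m

/-- The irrationality exponent `ω(ξ)` (as an element of `ℝ≥0∞`). -/
def omegaExp (ξ : LaurentSeries Fq) : ℝ≥0∞ :=
  ⨆ w ∈ {w : ℝ |
      {Q : Polynomial Fq | Q ≠ 0 ∧
        lnorm Fq (polyToL Fq Q * ξ) ≤ labs Fq (polyToL Fq Q) ^ (-w)}.Infinite},
    ENNReal.ofReal w

def plHom : Polynomial Fq →+* LaurentSeries Fq := eval₂RingHom HahnSeries.C (Tel Fq)

lemma pl_eq (p : Polynomial Fq) : polyToL Fq p = plHom Fq p := rfl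

lemma labs_nonneg (x : LaurentSeries Fq) : 0 ≤ labs Fq x := by
  unfold labs; split
  · exact le_refl 0
  · positivity

lemma labs_mul (x y : LaurentSeries Fq) : labs Fq (x*y) = labs Fq x * labs Fq y := by
  unfold labs
  by_cases hx : x = 0; · simp [hx]
  by_cases hy : y = 0; · simp [hy]
  have hq : (0:ℝ) < (Fintype.card Fq : ℝ) := by positivity
  rw [if_neg (mul_ne_zero hx hy), if_neg hx, if_neg hy, HahnSeries.order_mul hx hy, neg_add,
    zpow_add₀ hq.ne']

lemma labs_neg (x : LaurentSeries Fq) : labs Fq (-x) = labs Fq x := by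
  unfold labs; rw [neg_eq_zero, HahnSeries.order_neg]

lemma labs_one : labs Fq 1 = 1 := by
  unfold labs; rw [if_neg one_ne_zero, HahnSeries.order_one]; simp

lemma labs_add_le (x y : LaurentSeries Fq) :
    labs Fq (x+y) ≤ max (labs Fq x) (labs Fq y) := by
  by_cases hx : x = 0; · simp [hx, le_max_right]
  by_cases hy : y = 0; · simp [hy, le_max_left]
  by_cases hxy : x + y = 0
  · simp only [labs, if_pos hxy]
    exact le_max_of_le_left (by rw [if_neg hx]; positivity)
  have h := HahnSeries.min_order_le_order_add hxy
  simp only [labs, if_neg hx, if_neg hy, if_neg hxy]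
  have h1 : (1:ℝ) ≤ (Fintype.card Fq : ℝ) := by exact_mod_cast Fintype.card_pos
  rcases min_le_iff.mp h with h' | h'
  · exact le_max_of_le_left (zpow_le_zpow_right₀ h1 (by omega))
  · exact le_max_of_le_right (zpow_le_zpow_right₀ h1 (by omega))

lemma labs_neg_one_pow (k : ℕ) : labs Fq ((-1 : LaurentSeries Fq)^k) = 1 := by
  induction k with
  | zero => simpa using labs_one Fq
  | succ n ih => rw [pow_succ, labs_mul, ih, one_mul, labs_neg, labs_one]

/-- **Upper bound for the error form of `γ = N·U(a)·M_k`.** Writing the entries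
of `γ` as `V₁, U₁` (top row) and `V₂, U₂` (bottom row), and setting
`δ = sy − t`, `δ' = s'y − t'`, one has
`|V₁ξ + U₁ − y(V₂ξ + U₂)| ≤ max {|δ|/|Q_{k+1}|, |δa + δ'|/|Q_k|}`. -/
theorem stmt16 (ξ : LaurentSeries Fq) (hξirr : ¬ IsRat Fq ξ) (hξ1 : labs Fq ξ ≤ 1)
    (C : ℕ → Polynomial Fq) (hdeg : ∀ i, 1 ≤ i → 0 < (C i).natDegree)
    (hcf : HasCF Fq ξ C) (k : ℕ)
    (N : Matrix (Fin 2) (Fin 2) (Polynomial Fq)) (hN : N.det = 1)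
    (a : Polynomial Fq) (y : LaurentSeries Fq) :
    labs Fq (polyToL Fq ((N * Umat Fq a * cfM Fq C k) 0 0) * ξ
        + polyToL Fq ((N * Umat Fq a * cfM Fq C k) 0 1)
        - y * (polyToL Fq ((N * Umat Fq a * cfM Fq C k) 1 0) * ξ
          + polyToL Fq ((N * Umat Fq a * cfM Fq C k) 1 1)))
      ≤ max
        (labs Fq (polyToL Fq (N 1 0) * y - polyToL Fq (N 0 0)) /
          labs Fq (polyToL Fq (cfDen Fq C (k + 3))))
        (labs Fq ((polyToL Fq (N 1 0) * y - polyToL Fq (N 0 0)) * polyToL Fq a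
            + (polyToL Fq (N 1 1) * y - polyToL Fq (N 0 1))) /
          labs Fq (polyToL Fq (cfDen Fq C (k + 2)))) := by
  set δ := polyToL Fq (N 1 0) * y - polyToL Fq (N 0 0) with hδ
  set δ' := polyToL Fq (N 1 1) * y - polyToL Fq (N 0 1) with hδ'
  have he1 : labs Fq (polyToL Fq (cfDen Fq C (k+2)) * ξ - polyToL Fq (cfNum Fq C (k+2)))
      = (labs Fq (polyToL Fq (cfDen Fq C (k+3))))⁻¹ := hcf k
  have he0 : labs Fq (polyToL Fq (cfDen Fq C (k+1)) * ξ - polyToL Fq (cfNum Fq C (k+1)))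
      = (labs Fq (polyToL Fq (cfDen Fq C (k+2))))⁻¹ := by
    cases k with
    | zero =>
      have hd1 : cfDen Fq C 1 = 0 := rfl
      have hn1 : cfNum Fq C 1 = 1 := rfl
      have hd2 : cfDen Fq C 2 = 1 := by
        show C 0 * cfDen Fq C 1 + cfDen Fq C 0 = 1
        rw [hd1]; simp [cfDen]
      rw [hd1, hn1, hd2]
      simp only [pl_eq, map_zero, map_one]
      rw [zero_mul, zero_sub, labs_neg, labs_one, inv_one]
    | succ j => exact hcf j
  have key : polyToL Fq ((N * Umat Fq a * cfM Fq C k) 0 0) * ξ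
        + polyToL Fq ((N * Umat Fq a * cfM Fq C k) 0 1)
        - y * (polyToL Fq ((N * Umat Fq a * cfM Fq C k) 1 0) * ξ
          + polyToL Fq ((N * Umat Fq a * cfM Fq C k) 1 1))
      = -(δ * (polyToL Fq (cfDen Fq C (k+2)) * ξ - polyToL Fq (cfNum Fq C (k+2))))
        + (-1 : LaurentSeries Fq)^k * ((δ * polyToL Fq a + δ')
          * (polyToL Fq (cfDen Fq C (k+1)) * ξ - polyToL Fq (cfNum Fq C (k+1)))) := by
    rw [hδ, hδ']
    simp only [Matrix.mul_apply, Fin.sum_univ_two, Umat, cfM,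
      Matrix.cons_val', Matrix.cons_val_zero, Matrix.cons_val_one, Matrix.head_cons,
      Matrix.empty_val', Matrix.cons_val_fin_one, Matrix.head_fin_const, Matrix.of_apply]
    simp only [pl_eq, map_add, map_mul, map_neg, map_pow, map_one, map_zero]
    ring
  rw [key]
  calc labs Fq _
      ≤ max (labs Fq (-(δ * (polyToL Fq (cfDen Fq C (k+2)) * ξ - polyToL Fq (cfNum Fq C (k+2))))))
          (labs Fq ((-1 : LaurentSeries Fq)^k * ((δ * polyToL Fq a + δ')
            * (polyToL Fq (cfDen Fq C (k+1)) * ξ - polyToL Fq (cfNum Fq C (k+1)))))) :=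
        labs_add_le Fq _ _
    _ ≤ max
        (labs Fq δ / labs Fq (polyToL Fq (cfDen Fq C (k + 3))))
        (labs Fq (δ * polyToL Fq a + δ') / labs Fq (polyToL Fq (cfDen Fq C (k + 2)))) := by
        rw [labs_neg, labs_mul, labs_mul, labs_neg_one_pow, one_mul, labs_mul, he1, he0,
          div_eq_mul_inv, div_eq_mul_inv]


end
end
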